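/- Universal Boolean Reasoning (Theorem 'UniversalReasoning'): Let B_in ∈ ℕ₊ and let f : {0,1}^{B_in} → {0,1} be any Boolean function. Then for every failure probability 0 < δ ≤ 1 there exists a Stochastic Boolean Circuit 𝐂̂ : Ω × {0,1}^{B_in} → {0,1} (i.e., a choice of depth, layer widths, and all trainable parameters of the SBC model) such that ℙ( 𝐂̂(x) = f(x) for all x ∈ {0,1}^{B_in} ) ≥ 1 − δ. -/

import Mathlib

/-!
Statement 0: Certifiable Boolean Reasoning (Theorem `StructureAware`).

We formalize layered Boolean circuits of fan-in 2 / fan-out 1 (with an initial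
bit-lifting channel selecting input bits or their negations), the Stochastic
Boolean Circuit (SBC) model (random lifting selections, random one-hot edge
selections, and random gate selections, whose marginal laws are the softmax
laws determined by the trainable parameters), and state that for every choice
of trainable parameters the sampled function is almost surely computed by a
valid Boolean circuit of depth Δ = D+1 and width at most Υ.
-/

open MeasureTheory ProbabilityTheory

/-- Softmax on `ℝ^n`. -/
noncomputable def softmax {n : ℕ} (w : Fin n → ℝ) : Fin n → ℝ :=
  fun i => Real.exp (w i) / ∑ j, Real.exp (w j)

/-- The 16 fan-in-2, fan-out-1 Boolean gates, enumerated by their truth tables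
(`i.val.testBit` of the corner index, corners ordered `(0,0),(0,1),(1,0),(1,1)`). -/
def gate16 (i : Fin 16) : Bool → Bool → Bool :=
  fun a b => Nat.testBit i.val (2 * a.toNat + b.toNat)

/-- Decoding of an index `j ∈ [2B]` as a literal: an input bit (`j < B`,
second component `false`) or its negation (`j ≥ B`, second component `true`). -/
def liftDecode {Bin : ℕ} (j : Fin (2 * Bin)) : Fin Bin × Bool :=
  if h : j.val < Bin then (⟨j.val, h⟩, false)
  else (⟨j.val - Bin, by have := j.isLt; omega⟩, true)

/-- Law of the second edge selector:
`SM(η(1 − SM(ηW₁)) ⊙ SM(ηW₂))`. -/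
noncomputable def edgeLaw2 {n : ℕ} (η : ℝ) (W1 W2 : Fin n → ℝ) : Fin n → ℝ :=
  softmax (fun m => η * ((1 - softmax (η • W1) m) * softmax (η • W2) m))

/-- A (deterministic) layered Boolean circuit on `Bin` input bits with layer
widths `B 1, B 2, …` : an initial bit-lifting channel (each node of layer 1
selects an input bit or its negation), and for each later layer each node
selects exactly two predecessors (fan-in 2) and a gate among the 16 fan-in-2
Boolean gates. -/
structure BoolCircuit (Bin : ℕ) (B : ℕ → ℕ) where
  lift : Fin (B 1) → Fin Bin × Bool
  edge1 : (l : ℕ) → Fin (B (l + 2)) → Fin (B (l + 1))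
  edge2 : (l : ℕ) → Fin (B (l + 2)) → Fin (B (l + 1))
  gate : (l : ℕ) → Fin (B (l + 2)) → Fin 16

/-- Value of node `i` of layer `l+1` (layer 1 is the lifted layer). -/
def BoolCircuit.val {Bin : ℕ} {B : ℕ → ℕ} (C : BoolCircuit Bin B)
    (x : Fin Bin → Bool) : (l : ℕ) → Fin (B (l + 1)) → Bool
  | 0, i => xor (C.lift i).2 (x (C.lift i).1)
  | l + 1, i => gate16 (C.gate l i) (C.val x l (C.edge1 l i)) (C.val x l (C.edge2 l i))

/-- Output of a circuit of depth `Δ = D + 1` (its last layer has one node). -/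
def BoolCircuit.out {Bin : ℕ} {B : ℕ → ℕ} (C : BoolCircuit Bin B) (D : ℕ)
    (h1 : B (D + 1) = 1) (x : Fin Bin → Bool) : Bool :=
  C.val x D ⟨0, by omega⟩

/-- `f ∈ CIRCUIT^{Bin}_{Δ,Υ}` with `Δ = D + 1`: `f` is computed by a layered
fan-in-2 fan-out-1 Boolean circuit of depth `D + 1`, one output node, and all
layer widths at most `Υ`. -/
def InCircuitClass (Bin D Υ : ℕ) (f : (Fin Bin → Bool) → Bool) : Prop :=
  ∃ B : ℕ → ℕ, (∀ l ≤ D + 1, B l ≤ Υ) ∧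
    ∃ h1 : B (D + 1) = 1, ∃ C : BoolCircuit Bin B, ∀ x, C.out D h1 x = f x

/-- The Stochastic Boolean Circuit model of depth `Δ = D + 1` on `Bin` input
bits with layer widths `B 1, …, B (D+1)`: trainable parameters (a temperature
`η`, lifting weights `Wlift`, edge weights `W1, W2`, gate weights `Wgate`)
together with the random lifting / edge / gate selections, whose marginal laws
are the softmax laws prescribed by the parameters. -/
structure SBC (Ω : Type*) [MeasureSpace Ω] (Bin D : ℕ) (B : ℕ → ℕ) where
  η : ℝ
  Wlift : Fin (B 1) → Fin (2 * Bin) → ℝ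
  W1 : (l : ℕ) → Fin (B (l + 2)) → Fin (B (l + 1)) → ℝ
  W2 : (l : ℕ) → Fin (B (l + 2)) → Fin (B (l + 1)) → ℝ
  Wgate : (l : ℕ) → Fin (B (l + 2)) → Fin 16 → ℝ
  Lift : Ω → Fin (B 1) → Fin Bin × Bool
  Edge1 : Ω → (l : ℕ) → Fin (B (l + 2)) → Fin (B (l + 1))
  Edge2 : Ω → (l : ℕ) → Fin (B (l + 2)) → Fin (B (l + 1))
  Gate : Ω → (l : ℕ) → Fin (B (l + 2)) → Fin 16
  lift_law : ∀ i j,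
    ℙ {ω | Lift ω i = liftDecode j} = ENNReal.ofReal (softmax (Wlift i) j)
  edge1_law : ∀ l, l + 2 ≤ D + 1 → ∀ k m,
    ℙ {ω | Edge1 ω l k = m} = ENNReal.ofReal (softmax (η • W1 l k) m)
  edge2_law : ∀ l, l + 2 ≤ D + 1 → ∀ k m,
    ℙ {ω | Edge2 ω l k = m} = ENNReal.ofReal (edgeLaw2 η (W1 l k) (W2 l k) m)
  gate_law : ∀ l, l + 2 ≤ D + 1 → ∀ k i,
    ℙ {ω | Gate ω l k = i} = ENNReal.ofReal (softmax (Wgate l k) i)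

/-- The SBC recursion: value of node `i` of layer `l+1` at sample `ω`. -/
def SBC.val {Ω : Type*} [MeasureSpace Ω] {Bin D : ℕ} {B : ℕ → ℕ}
    (M : SBC Ω Bin D B) (ω : Ω) (x : Fin Bin → Bool) :
    (l : ℕ) → Fin (B (l + 1)) → Bool
  | 0, i => xor (M.Lift ω i).2 (x (M.Lift ω i).1)
  | l + 1, i =>
      gate16 (M.Gate ω l i) (M.val ω x l (M.Edge1 ω l i)) (M.val ω x l (M.Edge2 ω l i))

/-- The sampled function `𝐂̂(ω, ·)` of an SBC of depth `D + 1`. -/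
def SBC.out {Ω : Type*} [MeasureSpace Ω] {Bin D : ℕ} {B : ℕ → ℕ}
    (M : SBC Ω Bin D B) (h1 : B (D + 1) = 1) (ω : Ω) (x : Fin Bin → Bool) : Bool :=
  M.val ω x D ⟨0, by omega⟩


open Filter Topology

lemma sum_exp_pos {n : ℕ} [NeZero n] (w : Fin n → ℝ) : 0 < ∑ j, Real.exp (w j) :=
  Finset.sum_pos (fun j _ => Real.exp_pos _) ⟨⟨0, Nat.pos_of_ne_zero (NeZero.ne n)⟩, Finset.mem_univ _⟩

lemma softmax_nonneg {n : ℕ} (w : Fin n → ℝ) (j : Fin n) : 0 ≤ softmax w j :=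
  div_nonneg (Real.exp_pos _).le (Finset.sum_nonneg fun j _ => (Real.exp_pos _).le)

lemma sum_softmax {n : ℕ} [NeZero n] (w : Fin n → ℝ) : ∑ j, softmax w j = 1 := by
  unfold softmax
  rw [← Finset.sum_div, div_self (sum_exp_pos w).ne']

lemma softmax_eq_inv {n : ℕ} [NeZero n] (w : Fin n → ℝ) (t : Fin n) :
    softmax w t = (∑ m, Real.exp (w m - w t))⁻¹ := by
  unfold softmax
  simp only [Real.exp_sub, div_eq_mul_inv]
  rw [← Finset.sum_mul, mul_inv, inv_inv]
  ring

lemma tendsto_softmax_one {n : ℕ} [NeZero n] (t : Fin n) (w : ℝ → Fin n → ℝ)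
    (h : ∀ m, m ≠ t → Tendsto (fun H => w H m - w H t) atTop atBot) :
    Tendsto (fun H => softmax (w H) t) atTop (𝓝 1) := by
  have h1 : Tendsto (fun H => ∑ m, Real.exp (w H m - w H t)) atTop
      (𝓝 (∑ m : Fin n, if m = t then 1 else 0)) := by
    apply tendsto_finset_sum
    intro m _
    by_cases hm : m = t
    · subst hm; simp [tendsto_const_nhds]
    · simp only [hm, if_false]
      exact Real.tendsto_exp_atBot.comp (h m hm)
  rw [Finset.sum_ite_eq' Finset.univ t (fun _ => (1:ℝ))] at h1
  simp only [Finset.mem_univ, if_true] at h1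
  have := h1.inv₀ (by norm_num)
  simp only [inv_one] at this
  simpa only [softmax_eq_inv] using this

lemma tendsto_softmax_zero {n : ℕ} [NeZero n] (t : Fin n) (w : ℝ → Fin n → ℝ)
    (h : ∀ m, m ≠ t → Tendsto (fun H => w H m - w H t) atTop atBot)
    (m : Fin n) (hm : m ≠ t) :
    Tendsto (fun H => softmax (w H) m) atTop (𝓝 0) := by
  have key : ∀ H, softmax (w H) m = Real.exp (w H m - w H t) * softmax (w H) t := by
    intro H; unfold softmax; rw [Real.exp_sub]
    field_simp
  simp only [key]
  simpa using (Real.tendsto_exp_atBot.comp (h m hm)).mul (tendsto_softmax_one t w h)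

def ind {n : ℕ} (t : Fin n) : Fin n → ℝ := fun j => if j = t then 1 else 0

lemma gap_smul_ind {n : ℕ} (t m : Fin n) (hm : m ≠ t) :
    Tendsto (fun H : ℝ => (H • ind t) m - (H • ind t) t) atTop atBot := by
  have : (fun H : ℝ => (H • ind t) m - (H • ind t) t) = fun H : ℝ => -H := by
    funext H
    simp [ind, if_neg hm]
  rw [this]
  exact tendsto_neg_atTop_atBot

lemma tendsto_smul_ind_one {n : ℕ} [NeZero n] (t : Fin n) :
    Tendsto (fun H : ℝ => softmax (H • ind t) t) atTop (𝓝 1) :=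
  tendsto_softmax_one t _ (fun m hm => gap_smul_ind t m hm)

lemma tendsto_smul_ind_zero {n : ℕ} [NeZero n] (t m : Fin n) (hm : m ≠ t) :
    Tendsto (fun H : ℝ => softmax (H • ind t) m) atTop (𝓝 0) :=
  tendsto_softmax_zero t _ (fun m hm => gap_smul_ind t m hm) m hm

lemma tendsto_edgeLaw2 {n : ℕ} [NeZero n] (t1 t2 : Fin n) (hne : t1 ≠ t2) :
    Tendsto (fun H => edgeLaw2 H (ind t1) (ind t2) t2) atTop (𝓝 1) := by
  unfold edgeLaw2
  apply tendsto_softmax_one t2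
    (fun H m => H * ((1 - softmax (H • ind t1) m) * softmax (H • ind t2) m))
  intro m hm
  simp only [← mul_sub]
  have hv : Tendsto (fun H : ℝ =>
      (1 - softmax (H • ind t1) m) * softmax (H • ind t2) m -
      (1 - softmax (H • ind t1) t2) * softmax (H • ind t2) t2) atTop
      (𝓝 ((1 - (if m = t1 then 1 else 0)) * 0 - (1 - 0) * 1)) := by
    apply Tendsto.sub
    · apply Tendsto.mul
      · apply Tendsto.sub tendsto_const_nhds
        by_cases h1 : m = t1
        · subst h1; simp only [if_pos rfl]; exact tendsto_smul_ind_one m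
        · simp only [if_neg h1]; exact tendsto_smul_ind_zero t1 m h1
      · exact tendsto_smul_ind_zero t2 m hm
    · exact Tendsto.mul
        (Tendsto.sub tendsto_const_nhds (tendsto_smul_ind_zero t1 t2 hne.symm))
        (tendsto_smul_ind_one t2)
  have hneg : ((1 - (if m = t1 then 1 else 0)) * 0 - (1 - 0) * 1 : ℝ) < 0 := by
    split <;> norm_num
  exact Filter.Tendsto.atTop_mul_neg hneg tendsto_id hv

def Reach (Bin : ℕ) : ℕ → Set ((Fin Bin → Bool) → Bool)
  | 0 => {g | ∃ i b, g = fun x => xor b (x i)}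
  | l + 1 => {g | ∃ γ u v, u ∈ Reach Bin l ∧ v ∈ Reach Bin l ∧
      g = fun x => gate16 γ (u x) (v x)}

lemma gate16_proj1 : ∀ a b, gate16 12 a b = a := by decide
lemma gate16_and : ∀ a b, gate16 8 a b = (a && b) := by decide
lemma gate16_or : ∀ a b, gate16 14 a b = (a || b) := by decide
lemma gate16_true : ∀ a b, gate16 15 a b = true := by decide
lemma gate16_false : ∀ a b, gate16 0 a b = false := by decide

lemma Reach_succ {Bin : ℕ} (l : ℕ) {g : (Fin Bin → Bool) → Bool} (hg : g ∈ Reach Bin l) :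
    g ∈ Reach Bin (l + 1) := by
  refine ⟨12, g, g, hg, hg, ?_⟩
  funext x; rw [gate16_proj1]

lemma Reach_mono {Bin : ℕ} {l l' : ℕ} (h : l ≤ l') {g : (Fin Bin → Bool) → Bool}
    (hg : g ∈ Reach Bin l) : g ∈ Reach Bin l' := by
  induction l', h using Nat.le_induction with
  | base => exact hg
  | succ l' _ ih => exact Reach_succ l' ih

/-- reachable at some level -/
def RS {Bin : ℕ} (g : (Fin Bin → Bool) → Bool) : Prop := ∃ l, g ∈ Reach Bin l

lemma RS_lit {Bin : ℕ} (i : Fin Bin) (b : Bool) : RS (fun x => xor b (x i)) :=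
  ⟨0, i, b, rfl⟩

lemma RS_gate {Bin : ℕ} (γ : Fin 16) {u v : (Fin Bin → Bool) → Bool}
    (hu : RS u) (hv : RS v) : RS (fun x => gate16 γ (u x) (v x)) := by
  obtain ⟨l1, hu⟩ := hu
  obtain ⟨l2, hv⟩ := hv
  exact ⟨max l1 l2 + 1, γ, u, v, Reach_mono (le_max_left _ _) hu,
    Reach_mono (le_max_right _ _) hv, rfl⟩

lemma RS_and {Bin : ℕ} {u v : (Fin Bin → Bool) → Bool}
    (hu : RS u) (hv : RS v) : RS (fun x => u x && v x) := by
  have := RS_gate 8 hu hv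
  simpa [gate16_and] using this

lemma RS_or {Bin : ℕ} {u v : (Fin Bin → Bool) → Bool}
    (hu : RS u) (hv : RS v) : RS (fun x => u x || v x) := by
  have := RS_gate 14 hu hv
  simpa [gate16_or] using this

lemma RS_true {Bin : ℕ} (hBin : 0 < Bin) : RS (fun _ : Fin Bin → Bool => true) := by
  have h := RS_lit ⟨0, hBin⟩ false
  have := RS_gate 15 h h
  simpa [gate16_true] using this

lemma RS_false {Bin : ℕ} (hBin : 0 < Bin) : RS (fun _ : Fin Bin → Bool => false) := by
  have h := RS_lit ⟨0, hBin⟩ false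
  have := RS_gate 0 h h
  simpa [gate16_false] using this

lemma decide_and' (p q : Prop) [Decidable p] [Decidable q] :
    decide (p ∧ q) = (decide p && decide q) := by
  by_cases hp : p <;> by_cases hq : q <;> simp [hp, hq]

lemma decide_eq_bool : ∀ y z : Bool, decide (y = z) = xor (!z) y := by decide

lemma RS_minterm_aux {Bin : ℕ} (hBin : 0 < Bin) (a : Fin Bin → Bool) (s : Finset (Fin Bin)) :
    RS (fun x => decide (∀ i ∈ s, x i = a i)) := by
  induction s using Finset.induction with
  | empty => simpa using RS_true hBin
  | @insert j s hj ih =>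
    have heq : (fun x : Fin Bin → Bool => decide (∀ i ∈ insert j s, x i = a i))
        = fun x => (xor (!(a j)) (x j)) && decide (∀ i ∈ s, x i = a i) := by
      funext x
      rw [show decide (∀ i ∈ insert j s, x i = a i)
            = decide (x j = a j ∧ ∀ i ∈ s, x i = a i) from
          decide_eq_decide.mpr (Finset.forall_mem_insert _ _ _),
        decide_and', decide_eq_bool]
    rw [heq]
    exact RS_and (RS_lit j (!(a j))) ih

lemma RS_all {Bin : ℕ} (hBin : 0 < Bin) (f : (Fin Bin → Bool) → Bool) : RS f := by
  have main : ∀ (n : ℕ) (g : (Fin Bin → Bool) → Bool),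
      (Finset.univ.filter (fun x => g x = true)).card = n → RS g := by
    intro n
    induction n using Nat.strong_induction_on with
    | _ n ih =>
      intro g hcard
      rcases Nat.eq_zero_or_pos n with h0 | h0
      · subst h0
        have hempty := Finset.card_eq_zero.mp hcard
        have : g = fun _ => false := by
          funext x
          by_contra hx
          have : x ∈ Finset.univ.filter (fun x => g x = true) := by
            rw [Finset.mem_filter]
            exact ⟨Finset.mem_univ x, by revert hx; cases g x <;> simp⟩
          rw [hempty] at this
          exact absurd this (Finset.notMem_empty x)
        rw [this]; exact RS_false hBin
      · have hne : (Finset.univ.filter (fun x => g x = true)).Nonempty := by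
          rw [← Finset.card_pos, hcard]; exact h0
        obtain ⟨a, ha⟩ := hne
        have hga : g a = true := by simpa using ha
        set g' : (Fin Bin → Bool) → Bool := fun x => (!(decide (x = a))) && g x with hg'
        have hfilter : (Finset.univ.filter (fun x => g' x = true))
            = (Finset.univ.filter (fun x => g x = true)).erase a := by
          ext y
          simp only [hg', Finset.mem_filter, Finset.mem_univ, true_and, Finset.mem_erase,
            Bool.and_eq_true, Bool.not_eq_true', decide_eq_false_iff_not]
        have hcard' : (Finset.univ.filter (fun x => g' x = true)).card = n - 1 := by
          rw [hfilter, Finset.card_erase_of_mem ha, hcard]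
        have hrs' : RS g' := ih (n - 1) (by omega) g' hcard'
        have hmint : RS (fun x : Fin Bin → Bool => decide (∀ i ∈ Finset.univ, x i = a i)) :=
          RS_minterm_aux hBin a Finset.univ
        have hdecomp : g = fun x => g' x || decide (∀ i ∈ Finset.univ, x i = a i) := by
          funext x
          by_cases hx : x = a
          · have h1 : decide (∀ i ∈ Finset.univ, x i = a i) = true :=
              decide_eq_true (fun i _ => by rw [hx])
            rw [h1, Bool.or_true, hx, hga]
          · have h1 : decide (∀ i ∈ Finset.univ, x i = a i) = false := by
              apply decide_eq_false
              intro hall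
              exact hx (funext fun i => hall i (Finset.mem_univ i))
            have h2 : decide (x = a) = false := decide_eq_false hx
            simp only [h1, Bool.or_false, hg', h2, Bool.not_false, Bool.true_and]
        rw [hdecomp]
        exact RS_or hrs' hmint
  exact main _ f rfl

noncomputable def softPMF {n : ℕ} [NeZero n] (w : Fin n → ℝ) : PMF (Fin n) :=
  PMF.ofFintype (fun j => ENNReal.ofReal (softmax w j)) (by
    rw [← ENNReal.ofReal_one, ← sum_softmax w]
    exact (ENNReal.ofReal_sum_of_nonneg (fun j _ => softmax_nonneg w j)).symm)

lemma softPMF_toMeasure_singleton {n : ℕ} [NeZero n] (w : Fin n → ℝ) (j : Fin n) :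
    (softPMF w).toMeasure {j} = ENNReal.ofReal (softmax w j) := by
  rw [PMF.toMeasure_apply_singleton _ _ (measurableSet_singleton j)]
  simp [softPMF]

lemma pi_eval_mem {C : Type*} [Fintype C] {α : C → Type*} [∀ c, MeasurableSpace (α c)]
    (μ : ∀ c, Measure (α c)) [∀ c, IsProbabilityMeasure (μ c)] (c : C)
    (S : Set (α c)) :
    Measure.pi μ {ω | ω c ∈ S} = μ c S := by
  classical
  have hset : {ω : ∀ c, α c | ω c ∈ S}
      = Set.pi Set.univ (Function.update (fun c' => (Set.univ : Set (α c'))) c S) := by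
    ext ω
    simp only [Set.mem_setOf_eq, Set.mem_pi, Set.mem_univ, true_implies]
    constructor
    · intro h c'
      rcases eq_or_ne c' c with rfl | hc'
      · rwa [Function.update_self]
      · rw [Function.update_of_ne hc']; trivial
    · intro h
      have := h c
      rwa [Function.update_self] at this
  rw [hset, Measure.pi_pi]
  rw [Finset.prod_eq_single c
    (fun c' _ hc' => by rw [Function.update_of_ne hc']; exact measure_univ)
    (fun h => absurd (Finset.mem_univ c) h), Function.update_self]

lemma ofReal_prod' {ι : Type*} (s : Finset ι) (f : ι → ℝ) (hf : ∀ i ∈ s, 0 ≤ f i) :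
    ∏ i ∈ s, ENNReal.ofReal (f i) = ENNReal.ofReal (∏ i ∈ s, f i) := by
  classical
  induction s using Finset.induction with
  | empty => simp
  | @insert j s hj ih =>
    rw [Finset.prod_insert hj, Finset.prod_insert hj,
      ih (fun i hi => hf i (Finset.mem_insert_of_mem hi)),
      ENNReal.ofReal_mul (hf j (Finset.mem_insert_self j s))]

lemma liftDecode_injective {Bin : ℕ} : Function.Injective (liftDecode (Bin := Bin)) := by
  intro j1 j2 h
  unfold liftDecode at h
  have h1 := j1.isLt
  have h2 := j2.isLt
  split at h <;> split at h <;> simp only [Prod.mk.injEq, Fin.mk.injEq] at h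
  · exact Fin.ext (by omega)
  · exact absurd h.2 (by simp)
  · exact absurd h.2 (by simp)
  · exact Fin.ext (by omega)

def liftEnc {Bin : ℕ} (i : Fin Bin) (b : Bool) : Fin (2 * Bin) :=
  ⟨i.val + cond b Bin 0, by have := i.isLt; cases b <;> simp <;> omega⟩

lemma liftDecode_liftEnc {Bin : ℕ} (i : Fin Bin) (b : Bool) :
    liftDecode (liftEnc i b) = (i, b) := by
  have hlt := i.isLt
  cases b
  · show liftDecode ⟨i.val + cond false Bin 0, _⟩ = _
    unfold liftDecode
    rw [dif_pos (show (⟨i.val + cond false Bin 0, _⟩ : Fin (2 * Bin)).val < Bin by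
      simpa using hlt)]
    simp [Fin.ext_iff]
  · show liftDecode ⟨i.val + cond true Bin 0, _⟩ = _
    unfold liftDecode
    rw [dif_neg (show ¬ (⟨i.val + cond true Bin 0, _⟩ : Fin (2 * Bin)).val < Bin by
      simp)]
    simp [Fin.ext_iff]

namespace UR

abbrev F (Bin : ℕ) := (Fin Bin → Bool) → Bool

noncomputable def K (Bin : ℕ) : ℕ := Fintype.card (F Bin)

lemma K_pos {Bin : ℕ} : 0 < K Bin := Fintype.card_pos

noncomputable def eF {Bin : ℕ} : F Bin ≃ Fin (K Bin) := Fintype.equivFin _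

noncomputable def dec {Bin : ℕ} (j : Fin (2 * K Bin)) : F Bin :=
  eF.symm ⟨j.val % K Bin, Nat.mod_lt _ K_pos⟩

/-- layer widths -/
noncomputable def Bw (Bin D : ℕ) (l : ℕ) : ℕ := if l = D + 1 then 1 else 2 * K Bin

lemma Bw_pos {Bin D l : ℕ} : 0 < Bw Bin D l := by
  unfold Bw; split
  · omega
  · have := K_pos (Bin := Bin); omega

lemma Bw_eq {Bin D l : ℕ} (h : l ≠ D + 1) : Bw Bin D l = 2 * K Bin := if_neg h

lemma Bw_top {Bin D : ℕ} : Bw Bin D (D + 1) = 1 := if_pos rfl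

/-- intended function computed at node `j` of `val`-index `l` -/
noncomputable def lf {Bin : ℕ} (D : ℕ) (f : F Bin) (l : ℕ) (j : Fin (Bw Bin D (l + 1))) :
    F Bin :=
  if h : l = D then f else dec (Fin.cast (Bw_eq (by omega)) j)

noncomputable def wit0 {Bin : ℕ} {g : F Bin} (hg : g ∈ Reach Bin 0) : Fin Bin × Bool :=
  ⟨hg.choose, hg.choose_spec.choose⟩

lemma wit0_spec {Bin : ℕ} {g : F Bin} (hg : g ∈ Reach Bin 0) :
    g = fun x => xor (wit0 hg).2 (x (wit0 hg).1) := hg.choose_spec.choose_spec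

noncomputable def wit {Bin l : ℕ} {g : F Bin} (hg : g ∈ Reach Bin (l + 1)) :
    Fin 16 × F Bin × F Bin :=
  ⟨hg.choose, hg.choose_spec.choose, hg.choose_spec.choose_spec.choose⟩

lemma wit_spec {Bin l : ℕ} {g : F Bin} (hg : g ∈ Reach Bin (l + 1)) :
    (wit hg).2.1 ∈ Reach Bin l ∧ (wit hg).2.2 ∈ Reach Bin l ∧
      g = fun x => gate16 (wit hg).1 ((wit hg).2.1 x) ((wit hg).2.2 x) :=
  ⟨hg.choose_spec.choose_spec.choose_spec.1,
   hg.choose_spec.choose_spec.choose_spec.2.1,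
   hg.choose_spec.choose_spec.choose_spec.2.2⟩

lemma dec_lo {Bin : ℕ} (u : F Bin) (j : Fin (2 * K Bin)) (h : j.val = (eF u).val) :
    dec j = u := by
  unfold dec
  rw [show (⟨j.val % K Bin, Nat.mod_lt _ K_pos⟩ : Fin (K Bin)) = eF u from
    Fin.ext (by show j.val % K Bin = (eF u).val; rw [h]; exact Nat.mod_eq_of_lt (eF u).isLt)]
  exact eF.symm_apply_apply u

lemma dec_hi {Bin : ℕ} (v : F Bin) (j : Fin (2 * K Bin)) (h : j.val = K Bin + (eF v).val) :
    dec j = v := by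
  unfold dec
  rw [show (⟨j.val % K Bin, Nat.mod_lt _ K_pos⟩ : Fin (K Bin)) = eF v from
    Fin.ext (by show j.val % K Bin = (eF v).val
                rw [h, Nat.add_mod_left]
                exact Nat.mod_eq_of_lt (eF v).isLt)]
  exact eF.symm_apply_apply v

section Targets

attribute [local instance] Classical.propDecidable

variable {Bin : ℕ} (hBin : 0 < Bin) (D : ℕ) (f : F Bin)

noncomputable def tLift (j : Fin (Bw Bin D 1)) : Fin (2 * Bin) :=
  if hg : lf D f 0 j ∈ Reach Bin 0 then liftEnc (wit0 hg).1 (wit0 hg).2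
  else liftEnc ⟨0, hBin⟩ false

noncomputable def tE1 (l : ℕ) (k : Fin (Bw Bin D (l + 2))) : Fin (Bw Bin D (l + 1)) :=
  if h : l < D then
    Fin.cast (Bw_eq (by omega)).symm
      (if hg : lf D f (l + 1) k ∈ Reach Bin (l + 1) then
        ⟨(eF (wit hg).2.1).val, by have := (eF ((wit hg).2.1)).isLt; omega⟩
       else ⟨0, by have := K_pos (Bin := Bin); omega⟩)
  else ⟨0, Bw_pos⟩

noncomputable def tE2 (l : ℕ) (k : Fin (Bw Bin D (l + 2))) : Fin (Bw Bin D (l + 1)) :=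
  if h : l < D then
    Fin.cast (Bw_eq (by omega)).symm
      (if hg : lf D f (l + 1) k ∈ Reach Bin (l + 1) then
        ⟨K Bin + (eF (wit hg).2.2).val, by have := (eF ((wit hg).2.2)).isLt; omega⟩
       else ⟨K Bin, by have := K_pos (Bin := Bin); omega⟩)
  else ⟨0, Bw_pos⟩

noncomputable def tGate (l : ℕ) (k : Fin (Bw Bin D (l + 2))) : Fin 16 :=
  if h : l < D then
    (if hg : lf D f (l + 1) k ∈ Reach Bin (l + 1) then (wit hg).1 else 0)
  else 0

lemma tE1_val_lt (l : ℕ) (hl : l < D) (k : Fin (Bw Bin D (l + 2))) :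
    (tE1 D f l k).val < K Bin := by
  unfold tE1
  rw [dif_pos hl, Fin.coe_cast]
  split
  · exact (eF _).isLt
  · exact K_pos

lemma tE2_val_ge (l : ℕ) (hl : l < D) (k : Fin (Bw Bin D (l + 2))) :
    K Bin ≤ (tE2 D f l k).val := by
  unfold tE2
  rw [dif_pos hl, Fin.coe_cast]
  split
  · exact Nat.le_add_right _ _
  · exact Nat.le_refl _

lemma tE_ne (l : ℕ) (hl : l < D) (k : Fin (Bw Bin D (l + 2))) :
    tE1 D f l k ≠ tE2 D f l k := by
  intro hcontra
  have h1 := tE1_val_lt D f l hl k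
  have h2 := tE2_val_ge D f l hl k
  rw [hcontra] at h1
  omega

lemma lf_tE1 (l : ℕ) (hl : l < D) (k : Fin (Bw Bin D (l + 2)))
    (hg : lf D f (l + 1) k ∈ Reach Bin (l + 1)) :
    lf D f l (tE1 D f l k) = (wit hg).2.1 := by
  unfold lf
  rw [dif_neg (by omega : ¬ l = D)]
  apply dec_lo
  rw [Fin.coe_cast]
  unfold tE1
  rw [dif_pos hl, Fin.coe_cast, dif_pos hg]
  rfl

lemma lf_tE2 (l : ℕ) (hl : l < D) (k : Fin (Bw Bin D (l + 2)))
    (hg : lf D f (l + 1) k ∈ Reach Bin (l + 1)) :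
    lf D f l (tE2 D f l k) = (wit hg).2.2 := by
  unfold lf
  rw [dif_neg (by omega : ¬ l = D)]
  apply dec_hi
  rw [Fin.coe_cast]
  unfold tE2
  rw [dif_pos hl, Fin.coe_cast, dif_pos hg]
  rfl

lemma val_correct {Ω : Type*} [MeasureSpace Ω] (M : SBC Ω Bin D (Bw Bin D)) (ω : Ω)
    (hL : ∀ i, M.Lift ω i = liftDecode (tLift hBin D f i))
    (hE1 : ∀ l, l < D → ∀ k, M.Edge1 ω l k = tE1 D f l k)
    (hE2 : ∀ l, l < D → ∀ k, M.Edge2 ω l k = tE2 D f l k)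
    (hG : ∀ l, l < D → ∀ k, M.Gate ω l k = tGate D f l k)
    (x : Fin Bin → Bool) :
    ∀ l, l ≤ D → ∀ j : Fin (Bw Bin D (l + 1)), lf D f l j ∈ Reach Bin l →
      M.val ω x l j = lf D f l j x := by
  intro l
  induction l with
  | zero =>
    intro _ j hg
    show xor (M.Lift ω j).2 (x (M.Lift ω j).1) = _
    rw [hL j]
    unfold tLift
    rw [dif_pos hg, liftDecode_liftEnc]
    exact (congrFun (wit0_spec hg) x).symm
  | succ l ih =>
    intro hld j hg
    have hl : l < D := by omega
    show gate16 (M.Gate ω l j)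
      (M.val ω x l (M.Edge1 ω l j)) (M.val ω x l (M.Edge2 ω l j)) = _
    rw [hG l hl j, hE1 l hl j, hE2 l hl j]
    obtain ⟨hu, hv, heq⟩ := wit_spec hg
    rw [ih (by omega) _ (by rw [lf_tE1 D f l hl j hg]; exact hu),
        ih (by omega) _ (by rw [lf_tE2 D f l hl j hg]; exact hv)]
    rw [lf_tE1 D f l hl j hg, lf_tE2 D f l hl j hg]
    unfold tGate
    rw [dif_pos hl, dif_pos hg]
    exact (congrFun heq x).symm

end Targets

end UR

lemma edgeLaw2_nonneg {n : ℕ} (η : ℝ) (W1 W2 : Fin n → ℝ) (m : Fin n) :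
    0 ≤ edgeLaw2 η W1 W2 m := softmax_nonneg _ _

lemma prob_fst {A B : Type*} [MeasurableSpace A] [MeasurableSpace B]
    (μ : Measure A) (ν : Measure B) [IsProbabilityMeasure μ] [IsProbabilityMeasure ν]
    (S : Set A) : (μ.prod ν) {ω | ω.1 ∈ S} = μ S := by
  rw [show {ω : A × B | ω.1 ∈ S} = S ×ˢ Set.univ by ext ⟨a, b⟩; simp,
    Measure.prod_prod, measure_univ, mul_one]

lemma prob_snd {A B : Type*} [MeasurableSpace A] [MeasurableSpace B]
    (μ : Measure A) (ν : Measure B) [IsProbabilityMeasure μ] [IsProbabilityMeasure ν]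
    (S : Set B) : (μ.prod ν) {ω | ω.2 ∈ S} = ν S := by
  rw [show {ω : A × B | ω.2 ∈ S} = Set.univ ×ˢ S by ext ⟨a, b⟩; simp,
    Measure.prod_prod, measure_univ, one_mul]

open UR in
lemma SBC_exists {Bin D : ℕ} (hBin : 0 < Bin) (B : ℕ → ℕ)
    (hBpos : ∀ l, 0 < B l)
    (tL : Fin (B 1) → Fin (2 * Bin))
    (t1 t2 : (l : ℕ) → Fin (B (l + 2)) → Fin (B (l + 1)))
    (tG : (l : ℕ) → Fin (B (l + 2)) → Fin 16)
    (hne : ∀ l, l < D → ∀ k, t1 l k ≠ t2 l k)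
    (δ : ℝ) (hδ0 : 0 < δ) :
    ∃ (Ω : Type) (_ : MeasureSpace Ω) (_ : IsProbabilityMeasure (ℙ : Measure Ω))
      (M : SBC Ω Bin D B),
      ENNReal.ofReal (1 - δ) ≤
        ℙ {ω | (∀ i, M.Lift ω i = liftDecode (tL i)) ∧
               (∀ l, l < D → ∀ k, M.Edge1 ω l k = t1 l k) ∧
               (∀ l, l < D → ∀ k, M.Edge2 ω l k = t2 l k) ∧
               (∀ l, l < D → ∀ k, M.Gate ω l k = tG l k)} := by
  haveI : NeZero (2 * Bin) := ⟨by omega⟩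
  haveI : ∀ l, NeZero (B l) := fun l => ⟨(hBpos l).ne'⟩
  -- the four families of probabilities, as functions of the inverse temperature H
  set pL : ℝ → ℝ := fun H => ∏ i, softmax (H • ind (tL i)) (tL i) with hpL
  set p1 : ℝ → ℝ := fun H => ∏ l : Fin D, ∏ k : Fin (B (l.val + 2)),
    softmax (H • ind (t1 l.val k)) (t1 l.val k) with hp1
  set p2 : ℝ → ℝ := fun H => ∏ l : Fin D, ∏ k : Fin (B (l.val + 2)),
    edgeLaw2 H (ind (t1 l.val k)) (ind (t2 l.val k)) (t2 l.val k) with hp2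
  set pG : ℝ → ℝ := fun H => ∏ l : Fin D, ∏ k : Fin (B (l.val + 2)),
    softmax (H • ind (tG l.val k)) (tG l.val k) with hpG
  set Q : ℝ → ℝ := fun H => pL H * (p1 H * (p2 H * pG H)) with hQdef
  have hQ : Filter.Tendsto Q Filter.atTop (nhds 1) := by
    have hprod1 : ∀ {n : ℕ} (hn : 0 < n) (ι : Type) (_ : Fintype ι)
        (t : ι → Fin n), True := fun _ _ _ _ => trivial
    have hL : Filter.Tendsto pL Filter.atTop (nhds 1) := by
      rw [hpL, show (1 : ℝ) = ∏ _i : Fin (B 1), 1 by simp]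
      exact tendsto_finset_prod _ (fun i _ => tendsto_smul_ind_one (tL i))
    have h1 : Filter.Tendsto p1 Filter.atTop (nhds 1) := by
      rw [hp1, show (1 : ℝ) = ∏ _l : Fin D, 1 by simp]
      refine tendsto_finset_prod _ (fun l _ => ?_)
      rw [show (1 : ℝ) = ∏ _k : Fin (B (l.val + 2)), 1 by simp]
      exact tendsto_finset_prod _ (fun k _ => tendsto_smul_ind_one (t1 l.val k))
    have h2 : Filter.Tendsto p2 Filter.atTop (nhds 1) := by
      rw [hp2, show (1 : ℝ) = ∏ _l : Fin D, 1 by simp]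
      refine tendsto_finset_prod _ (fun l _ => ?_)
      rw [show (1 : ℝ) = ∏ _k : Fin (B (l.val + 2)), 1 by simp]
      exact tendsto_finset_prod _ (fun k _ =>
        tendsto_edgeLaw2 _ _ (hne l.val l.isLt k))
    have hG : Filter.Tendsto pG Filter.atTop (nhds 1) := by
      rw [hpG, show (1 : ℝ) = ∏ _l : Fin D, 1 by simp]
      refine tendsto_finset_prod _ (fun l _ => ?_)
      rw [show (1 : ℝ) = ∏ _k : Fin (B (l.val + 2)), 1 by simp]
      exact tendsto_finset_prod _ (fun k _ => tendsto_smul_ind_one (tG l.val k))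
    have := hL.mul (h1.mul (h2.mul hG))
    simpa using this
  have hev : ∀ᶠ H in Filter.atTop, 1 - δ < Q H :=
    hQ.eventually (eventually_gt_nhds (by linarith))
  obtain ⟨H, hH⟩ := hev.exists
  -- the sample space
  letI ΩT : Type := (Fin (B 1) → Fin (2 * Bin)) ×
      (((l : Fin D) → Fin (B (l.val + 2)) → Fin (B (l.val + 1))) ×
       (((l : Fin D) → Fin (B (l.val + 2)) → Fin (B (l.val + 1))) ×
        ((l : Fin D) → Fin (B (l.val + 2)) → Fin 16)))
  letI μL : Measure (Fin (B 1) → Fin (2 * Bin)) :=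
    Measure.pi fun i => (softPMF (H • ind (tL i))).toMeasure
  letI μ1 : Measure ((l : Fin D) → Fin (B (l.val + 2)) → Fin (B (l.val + 1))) :=
    Measure.pi fun l : Fin D => Measure.pi fun k =>
      (softPMF (H • ind (t1 l.val k))).toMeasure
  letI μ2 : Measure ((l : Fin D) → Fin (B (l.val + 2)) → Fin (B (l.val + 1))) :=
    Measure.pi fun l : Fin D => Measure.pi fun k =>
      (softPMF (fun m => H * ((1 - softmax (H • ind (t1 l.val k)) m) *
        softmax (H • ind (t2 l.val k)) m))).toMeasure
  letI μG : Measure ((l : Fin D) → Fin (B (l.val + 2)) → Fin 16) :=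
    Measure.pi fun l : Fin D => Measure.pi fun k =>
      (softPMF (H • ind (tG l.val k))).toMeasure
  haveI hpL' : IsProbabilityMeasure μL := inferInstance
  haveI hp1' : IsProbabilityMeasure μ1 := inferInstance
  haveI hp2' : IsProbabilityMeasure μ2 := inferInstance
  haveI hpG' : IsProbabilityMeasure μG := inferInstance
  letI mΩ : MeasureSpace ΩT := ⟨μL.prod (μ1.prod (μ2.prod μG))⟩
  haveI hPM : IsProbabilityMeasure (ℙ : Measure ΩT) :=
    inferInstanceAs (IsProbabilityMeasure (μL.prod (μ1.prod (μ2.prod μG))))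
  have hμL : (ℙ : Measure ΩT) = μL.prod (μ1.prod (μ2.prod μG)) := rfl
  have hμLpi : μL = Measure.pi fun i => (softPMF (H • ind (tL i))).toMeasure := rfl
  have hμ1pi : μ1 = Measure.pi fun l : Fin D => Measure.pi fun k =>
      (softPMF (H • ind (t1 l.val k))).toMeasure := rfl
  have hμ2pi : μ2 = Measure.pi fun l : Fin D => Measure.pi fun k =>
      (softPMF (fun m => H * ((1 - softmax (H • ind (t1 l.val k)) m) *
        softmax (H • ind (t2 l.val k)) m))).toMeasure := rfl
  have hμGpi : μG = Measure.pi fun l : Fin D => Measure.pi fun k =>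
      (softPMF (H • ind (tG l.val k))).toMeasure := rfl
  refine ⟨ΩT, mΩ, hPM,
    ⟨H, (fun i => H • ind (tL i)), (fun l k => ind (t1 l k)), (fun l k => ind (t2 l k)),
     (fun l k => H • ind (tG l k)),
     (fun ω i => liftDecode (ω.1 i)),
     (fun ω l k => if h : l < D then ω.2.1 ⟨l, h⟩ k else ⟨0, hBpos _⟩),
     (fun ω l k => if h : l < D then ω.2.2.1 ⟨l, h⟩ k else ⟨0, hBpos _⟩),
     (fun ω l k => if h : l < D then ω.2.2.2 ⟨l, h⟩ k else 0),
     ?_, ?_, ?_, ?_⟩, ?_⟩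
  · -- lift law
    intro i j
    have hset : {ω : ΩT | liftDecode (ω.1 i) = liftDecode j}
        = {ω : ΩT | ω.1 ∈ {v : Fin (B 1) → Fin (2 * Bin) | v i ∈ ({j} : Set (Fin (2 * Bin)))}} := by
      ext ω
      simp only [Set.mem_setOf_eq, Set.mem_singleton_iff]
      exact ⟨fun h => liftDecode_injective h, fun h => by rw [h]⟩
    rw [hμL, hset, prob_fst, hμLpi, pi_eval_mem, softPMF_toMeasure_singleton]
  · -- edge1 law
    intro l hl2 k m
    have hl : l < D := by omega
    have hset : {ω : ΩT | (if h : l < D then ω.2.1 ⟨l, h⟩ k else ⟨0, hBpos _⟩) = m}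
        = {ω : ΩT | ω.2 ∈ {p : _ × _ | p.1 ∈
            {v : (l' : Fin D) → Fin (B (l'.val + 2)) → Fin (B (l'.val + 1)) |
              v ∈ {v' | v' ⟨l, hl⟩ ∈ {w | w k ∈ ({m} : Set _)}}}}} := by
      ext ω
      simp only [Set.mem_setOf_eq, Set.mem_singleton_iff, dif_pos hl]
    rw [hμL, hset, prob_snd, prob_fst, hμ1pi]
    exact (pi_eval_mem (fun l' : Fin D => Measure.pi fun k' =>
        (softPMF (H • ind (t1 l'.val k'))).toMeasure) ⟨l, hl⟩
        {w | w k ∈ ({m} : Set (Fin (B (l + 1))))}).trans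
      ((pi_eval_mem (fun k' => (softPMF (H • ind (t1 l k'))).toMeasure) k
        ({m} : Set (Fin (B (l + 1))))).trans
       (softPMF_toMeasure_singleton (H • ind (t1 l k)) m))
  · -- edge2 law
    intro l hl2 k m
    have hl : l < D := by omega
    have hset : {ω : ΩT | (if h : l < D then ω.2.2.1 ⟨l, h⟩ k else ⟨0, hBpos _⟩) = m}
        = {ω : ΩT | ω.2 ∈ {p : _ × _ | p.2 ∈ {q : _ × _ | q.1 ∈
            {v : (l' : Fin D) → Fin (B (l'.val + 2)) → Fin (B (l'.val + 1)) |
              v ∈ {v' | v' ⟨l, hl⟩ ∈ {w | w k ∈ ({m} : Set _)}}}}}} := by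
      ext ω
      simp only [Set.mem_setOf_eq, Set.mem_singleton_iff, dif_pos hl]
    rw [hμL, hset, prob_snd, prob_snd, prob_fst, hμ2pi]
    exact (pi_eval_mem (fun l' : Fin D => Measure.pi fun k' =>
        (softPMF (fun m' => H * ((1 - softmax (H • ind (t1 l'.val k')) m') *
          softmax (H • ind (t2 l'.val k')) m'))).toMeasure) ⟨l, hl⟩
        {w | w k ∈ ({m} : Set (Fin (B (l + 1))))}).trans
      ((pi_eval_mem (fun k' => (softPMF (fun m' => H * ((1 - softmax (H • ind (t1 l k')) m') *
          softmax (H • ind (t2 l k')) m'))).toMeasure) k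
        ({m} : Set (Fin (B (l + 1))))).trans
       (softPMF_toMeasure_singleton _ m))
  · -- gate law
    intro l hl2 k i
    have hl : l < D := by omega
    have hset : {ω : ΩT | (if h : l < D then ω.2.2.2 ⟨l, h⟩ k else 0) = i}
        = {ω : ΩT | ω.2 ∈ {p : _ × _ | p.2 ∈ {q : _ × _ | q.2 ∈
            {v : (l' : Fin D) → Fin (B (l'.val + 2)) → Fin 16 |
              v ∈ {v' | v' ⟨l, hl⟩ ∈ {w | w k ∈ ({i} : Set _)}}}}}} := by
      ext ω
      simp only [Set.mem_setOf_eq, Set.mem_singleton_iff, dif_pos hl]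
    rw [hμL, hset, prob_snd, prob_snd, prob_snd, hμGpi]
    exact (pi_eval_mem (fun l' : Fin D => Measure.pi fun k' =>
        (softPMF (H • ind (tG l'.val k'))).toMeasure) ⟨l, hl⟩
        {w | w k ∈ ({i} : Set (Fin 16))}).trans
      ((pi_eval_mem (fun k' => (softPMF (H • ind (tG l k'))).toMeasure) k
        ({i} : Set (Fin 16))).trans
       (softPMF_toMeasure_singleton (H • ind (tG l k)) i))
  · -- probability bound
    letI SL : Set (Fin (B 1) → Fin (2 * Bin)) := Set.pi Set.univ fun i => {tL i}
    letI S1 : Set ((l' : Fin D) → Fin (B (l'.val + 2)) → Fin (B (l'.val + 1))) :=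
      Set.pi Set.univ fun l' => Set.pi Set.univ fun k => {t1 l'.val k}
    letI S2 : Set ((l' : Fin D) → Fin (B (l'.val + 2)) → Fin (B (l'.val + 1))) :=
      Set.pi Set.univ fun l' => Set.pi Set.univ fun k => {t2 l'.val k}
    letI SG : Set ((l' : Fin D) → Fin (B (l'.val + 2)) → Fin 16) :=
      Set.pi Set.univ fun l' => Set.pi Set.univ fun k => {tG l'.val k}
    have h1 : μL SL = ENNReal.ofReal (pL H) := by
      rw [hμLpi, show SL = Set.pi Set.univ (fun i => ({tL i} : Set _)) from rfl,
        Measure.pi_pi,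
        Finset.prod_congr rfl (fun i _ => softPMF_toMeasure_singleton (H • ind (tL i)) (tL i)),
        ofReal_prod' _ _ (fun i _ => softmax_nonneg _ _)]
    have hinner1 : ∀ l' : Fin D,
        (Measure.pi fun k => (softPMF (H • ind (t1 l'.val k))).toMeasure)
          (Set.pi Set.univ fun k => {t1 l'.val k})
        = ENNReal.ofReal (∏ k, softmax (H • ind (t1 l'.val k)) (t1 l'.val k)) := fun l' => by
      rw [Measure.pi_pi,
        Finset.prod_congr rfl (fun k _ => softPMF_toMeasure_singleton _ _),
        ofReal_prod' _ _ (fun k _ => softmax_nonneg _ _)]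
    have h2 : μ1 S1 = ENNReal.ofReal (p1 H) := by
      rw [hμ1pi, show S1 = Set.pi Set.univ (fun l' : Fin D =>
          Set.pi Set.univ fun k => ({t1 l'.val k} : Set _)) from rfl,
        Measure.pi_pi, Finset.prod_congr rfl (fun l' _ => hinner1 l'),
        ofReal_prod' _ _ (fun l' _ => Finset.prod_nonneg (fun k _ => softmax_nonneg _ _))]
    have hinner2 : ∀ l' : Fin D,
        (Measure.pi fun k => (softPMF (fun m => H * ((1 - softmax (H • ind (t1 l'.val k)) m) *
            softmax (H • ind (t2 l'.val k)) m))).toMeasure)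
          (Set.pi Set.univ fun k => {t2 l'.val k})
        = ENNReal.ofReal (∏ k, edgeLaw2 H (ind (t1 l'.val k)) (ind (t2 l'.val k)) (t2 l'.val k)) :=
      fun l' => by
      rw [Measure.pi_pi,
        Finset.prod_congr rfl (fun k _ => softPMF_toMeasure_singleton _ _),
        ofReal_prod' _ _ (fun k _ => softmax_nonneg _ _)]
      rfl
    have h3 : μ2 S2 = ENNReal.ofReal (p2 H) := by
      rw [hμ2pi, show S2 = Set.pi Set.univ (fun l' : Fin D =>
          Set.pi Set.univ fun k => ({t2 l'.val k} : Set _)) from rfl,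
        Measure.pi_pi, Finset.prod_congr rfl (fun l' _ => hinner2 l'),
        ofReal_prod' _ _ (fun l' _ => Finset.prod_nonneg (fun k _ => edgeLaw2_nonneg _ _ _ _))]
    have hinner4 : ∀ l' : Fin D,
        (Measure.pi fun k => (softPMF (H • ind (tG l'.val k))).toMeasure)
          (Set.pi Set.univ fun k => {tG l'.val k})
        = ENNReal.ofReal (∏ k, softmax (H • ind (tG l'.val k)) (tG l'.val k)) := fun l' => by
      rw [Measure.pi_pi,
        Finset.prod_congr rfl (fun k _ => softPMF_toMeasure_singleton _ _),
        ofReal_prod' _ _ (fun k _ => softmax_nonneg _ _)]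
    have h4 : μG SG = ENNReal.ofReal (pG H) := by
      rw [hμGpi, show SG = Set.pi Set.univ (fun l' : Fin D =>
          Set.pi Set.univ fun k => ({tG l'.val k} : Set _)) from rfl,
        Measure.pi_pi, Finset.prod_congr rfl (fun l' _ => hinner4 l'),
        ofReal_prod' _ _ (fun l' _ => Finset.prod_nonneg (fun k _ => softmax_nonneg _ _))]
    have hp1nn : 0 ≤ p1 H := Finset.prod_nonneg fun l' _ =>
      Finset.prod_nonneg fun k _ => softmax_nonneg _ _
    have hp2nn : 0 ≤ p2 H := Finset.prod_nonneg fun l' _ =>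
      Finset.prod_nonneg fun k _ => edgeLaw2_nonneg _ _ _ _
    have hpLnn : 0 ≤ pL H := Finset.prod_nonneg fun i _ => softmax_nonneg _ _
    have hPE : (ℙ : Measure ΩT) (SL ×ˢ (S1 ×ˢ (S2 ×ˢ SG))) = ENNReal.ofReal (Q H) := by
      rw [hμL, Measure.prod_prod, Measure.prod_prod, Measure.prod_prod, h1, h2, h3, h4,
        ← ENNReal.ofReal_mul hp2nn, ← ENNReal.ofReal_mul hp1nn, ← ENNReal.ofReal_mul hpLnn]
    have hsub : SL ×ˢ (S1 ×ˢ (S2 ×ˢ SG)) ⊆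
        {ω : ΩT | (∀ i, liftDecode (ω.1 i) = liftDecode (tL i)) ∧
          (∀ l, (hl : l < D) → ∀ k,
            (if h : l < D then ω.2.1 ⟨l, h⟩ k else ⟨0, hBpos _⟩) = t1 l k) ∧
          (∀ l, (hl : l < D) → ∀ k,
            (if h : l < D then ω.2.2.1 ⟨l, h⟩ k else ⟨0, hBpos _⟩) = t2 l k) ∧
          (∀ l, (hl : l < D) → ∀ k,
            (if h : l < D then ω.2.2.2 ⟨l, h⟩ k else 0) = tG l k)} := by
      intro ω hω
      obtain ⟨hA, hB, hC, hD'⟩ := hω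
      refine ⟨fun i => congrArg liftDecode (hA i (Set.mem_univ i)), ?_, ?_, ?_⟩
      · intro l hl k
        rw [dif_pos hl]
        exact hB ⟨l, hl⟩ (Set.mem_univ _) k (Set.mem_univ _)
      · intro l hl k
        rw [dif_pos hl]
        exact hC ⟨l, hl⟩ (Set.mem_univ _) k (Set.mem_univ _)
      · intro l hl k
        rw [dif_pos hl]
        exact hD' ⟨l, hl⟩ (Set.mem_univ _) k (Set.mem_univ _)
    calc ENNReal.ofReal (1 - δ) ≤ ENNReal.ofReal (Q H) := ENNReal.ofReal_le_ofReal hH.le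
      _ = (ℙ : Measure ΩT) (SL ×ˢ (S1 ×ˢ (S2 ×ˢ SG))) := hPE.symm
      _ ≤ _ := measure_mono hsub


/-- **Universal Boolean Reasoning.** For every Boolean function
`f : {0,1}^{B_in} → {0,1}` and every failure probability `0 < δ ≤ 1`, there is
a Stochastic Boolean Circuit `𝐂̂` — i.e. a probability space, a depth
`Δ = D + 1`, layer widths `B 1, …, B (D+1) = 1`, and a choice of all trainable
parameters of the SBC model — such that
`ℙ( 𝐂̂(x) = f(x) for all x ) ≥ 1 − δ`. -/
theorem UniversalReasoning
    (Bin : ℕ) (hBin : 0 < Bin) (f : (Fin Bin → Bool) → Bool)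
    (δ : ℝ) (hδ0 : 0 < δ) (hδ1 : δ ≤ 1) :
    ∃ (Ω : Type) (_ : MeasureSpace Ω) (_ : IsProbabilityMeasure (ℙ : Measure Ω))
      (D : ℕ) (B : ℕ → ℕ) (h1 : B (D + 1) = 1) (M : SBC Ω Bin D B),
      ENNReal.ofReal (1 - δ) ≤ ℙ {ω | ∀ x, M.out h1 ω x = f x} := by
  obtain ⟨L0, hfR0⟩ := RS_all hBin f
  have hf : f ∈ Reach Bin (L0 + 1) := Reach_succ _ hfR0
  obtain ⟨Ω, inst, instP, M, hbound⟩ := SBC_exists (D := L0 + 1) hBin (UR.Bw Bin (L0 + 1))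
    (fun l => UR.Bw_pos) (UR.tLift hBin (L0 + 1) f) (UR.tE1 (L0 + 1) f)
    (UR.tE2 (L0 + 1) f) (UR.tGate (L0 + 1) f)
    (fun l hl k => UR.tE_ne (L0 + 1) f l hl k) δ hδ0
  refine ⟨Ω, inst, instP, L0 + 1, UR.Bw Bin (L0 + 1), UR.Bw_top, M,
    le_trans hbound (measure_mono ?_)⟩
  intro ω hω
  obtain ⟨hL, hE1, hE2, hG⟩ := hω
  intro x
  have hg : UR.lf (L0 + 1) f (L0 + 1)
      (⟨0, by rw [UR.Bw_top]; omega⟩ : Fin (UR.Bw Bin (L0 + 1) (L0 + 1 + 1)))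
      ∈ Reach Bin (L0 + 1) := by
    rw [show UR.lf (L0 + 1) f (L0 + 1) _ = f from dif_pos rfl]
    exact hf
  have hval := UR.val_correct hBin (L0 + 1) f M ω hL hE1 hE2 hG x (L0 + 1) le_rfl
    ⟨0, by rw [UR.Bw_top]; omega⟩ hg
  show M.val ω x (L0 + 1) _ = f x
  rw [hval, show UR.lf (L0 + 1) f (L0 + 1) _ = f from dif_pos rfl]
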